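/- Let X be a σ-compact locally compact Hausdorff space, ν a Borel measure on X finite on compact sets, H a complex Hilbert space, and ψ : X → H a total family such that for every f ∈ H the function x ↦ ⟨ψ_x, f⟩ is ν-measurable and locally ν-integrable. Let C be the analysis operator (domain Dom(C) = {f : x ↦ ⟨ψ_x, f⟩ ∈ L²(X, ν)}) and D the weakly defined synthesis operator, and assume Dom(C) is dense in H. Then: (i) D ⊆ C*, i.e. Dom(D) ⊆ Dom(C*) and C* F = D F for all F ∈ Dom(D); in particular D is closable. (ii) D is closed if and only if D = C*; and in that case the operator S := C*C is self-adjoint in H. -/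

import Mathlib

set_option maxHeartbeats 1000000
set_option synthInstance.maxHeartbeats 1000000
set_option linter.unusedSectionVars false
set_option linter.unusedVariables false


open MeasureTheory Filter
open scoped ComplexInnerProductSpace ENNReal

namespace SemiFrames4

variable {X : Type*} [TopologicalSpace X] [MeasurableSpace X] (ν : Measure X)
  {H : Type*} [NormedAddCommGroup H] [InnerProductSpace ℂ H] [CompleteSpace H]
  (ψ : X → H)

/-- `(F, g)` belongs to the graph of the weakly defined synthesis operator `D`:
`∫ conj(F x) ⟪ψ x, f⟫ dν = ⟪g, f⟫` for every `f ∈ H`, the integrand being integrable. -/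
def IsSynth (F : Lp ℂ 2 ν) (g : H) : Prop :=
  ∀ f : H, Integrable (fun x => (starRingEnd ℂ) (F x) * ⟪ψ x, f⟫) ν ∧
    ∫ x, (starRingEnd ℂ) (F x) * ⟪ψ x, f⟫ ∂ν = ⟪g, f⟫

/-- `(F, g)` belongs to the graph of the adjoint `C*` of the analysis operator `C`:
`⟪g, f⟫ = ⟪F, C f⟫` for every `f ∈ Dom(C)`. -/
def MemGraphAdjC (F : Lp ℂ 2 ν) (g : H) : Prop :=
  ∀ (f : H) (hf : MemLp (fun x => ⟪ψ x, f⟫) 2 ν),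
    ⟪g, f⟫ = ⟪F, hf.toLp (fun x => ⟪ψ x, f⟫)⟫

/-- `(f, h)` belongs to the graph of `S = C*C`: `f ∈ Dom(C)` and `(C f, h)` belongs to the
graph of `C*`. -/
def MemGraphS (f h : H) : Prop :=
  ∃ hf : MemLp (fun x => ⟪ψ x, f⟫) 2 ν,
    MemGraphAdjC ν ψ (hf.toLp (fun x => ⟪ψ x, f⟫)) h

variable {ν ψ}

lemma inner_eq_integral (F : Lp ℂ 2 ν) {φ : X → ℂ} (hφ : MemLp φ 2 ν) :
    ⟪F, hφ.toLp φ⟫ = ∫ x, (starRingEnd ℂ) (F x) * φ x ∂ν := by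
  rw [L2.inner_def]
  refine integral_congr_ae ?_
  filter_upwards [hφ.coeFn_toLp] with x hx
  rw [hx]
  exact mul_comm _ _

lemma isSynth_to_adj {F : Lp ℂ 2 ν} {g : H} (h : IsSynth ν ψ F g) : MemGraphAdjC ν ψ F g := by
  intro f hf
  rw [inner_eq_integral]
  exact ((h f).2).symm

lemma inner_L2_eq_integral (F G : Lp ℂ 2 ν) :
    ⟪F, G⟫ = ∫ x, (starRingEnd ℂ) (F x) * G x ∂ν := by
  rw [L2.inner_def]; congr 1; funext x; exact mul_comm _ _

lemma closable_aux (hdense : Dense {f : H | MemLp (fun x => ⟪ψ x, f⟫) 2 ν})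
    (F : ℕ → Lp ℂ 2 ν) (g : ℕ → H) (glim : H) (hs : ∀ n, IsSynth ν ψ (F n) (g n))
    (hF : Tendsto F atTop (nhds 0)) (hg : Tendsto g atTop (nhds glim)) : glim = 0 := by
  have key : {f : H | MemLp (fun x => ⟪ψ x, f⟫) 2 ν} ⊆ {f : H | ⟪glim, f⟫ = 0} := by
    intro f hf
    have h1 : Tendsto (fun n => ⟪g n, f⟫) atTop (nhds ⟪glim, f⟫) :=
      hg.inner tendsto_const_nhds
    have h2 : Tendsto (fun n => ⟪F n, hf.toLp (fun x => ⟪ψ x, f⟫)⟫) atTop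
        (nhds ⟪(0 : Lp ℂ 2 ν), hf.toLp (fun x => ⟪ψ x, f⟫)⟫) := hF.inner tendsto_const_nhds
    rw [inner_zero_left] at h2
    have h3 : (fun n => ⟪g n, f⟫) = fun n => ⟪F n, hf.toLp (fun x => ⟪ψ x, f⟫)⟫ := by
      funext n; exact isSynth_to_adj (hs n) f hf
    rw [h3] at h1
    exact tendsto_nhds_unique h1 h2
  have hc : IsClosed {f : H | ⟪glim, f⟫ = 0} :=
    isClosed_eq (continuous_const.inner continuous_id) continuous_const
  have : ∀ f : H, ⟪glim, f⟫ = 0 := by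
    intro f
    have := closure_minimal key hc
    rw [hdense.closure_eq] at this
    exact this trivial
  simpa using inner_self_eq_zero.mp (this glim)

set_option linter.unusedVariables false

/-- The coefficient map into `L¹(K)` is continuous (closed graph theorem). -/
lemma coeff_L1_bound
    (hmeas : ∀ f : H, AEMeasurable (fun x => ⟪ψ x, f⟫) ν)
    (hloc : ∀ (f : H) (K : Set X), IsCompact K → IntegrableOn (fun x => ⟪ψ x, f⟫) K ν)
    {K : Set X} (hK : IsCompact K) :
    ∃ M : ℝ, 0 ≤ M ∧ ∀ f : H, ∫ x in K, ‖⟪ψ x, f⟫‖ ∂ν ≤ M * ‖f‖ := by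
  have hint : ∀ f : H, MemLp (fun x => ⟪ψ x, f⟫) 1 (ν.restrict K) := fun f =>
    memLp_one_iff_integrable.2 (hloc f K hK)
  let L : H →ₗ[ℂ] Lp ℂ 1 (ν.restrict K) :=
    { toFun := fun f => (hint f).toLp (fun x => ⟪ψ x, f⟫)
      map_add' := by
        intro f g
        have h1 : (fun x => ⟪ψ x, f + g⟫) = fun x => ⟪ψ x, f⟫ + ⟪ψ x, g⟫ := by
          funext x; exact inner_add_right _ _ _
        show (hint (f + g)).toLp _ = (hint f).toLp _ + (hint g).toLp _
        rw [MemLp.toLp_congr (hint (f + g)) ((hint f).add (hint g)) (by rw [h1]; rfl),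
          MemLp.toLp_add]
      map_smul' := by
        intro c f
        have h1 : (fun x => ⟪ψ x, c • f⟫) = c • fun x => ⟪ψ x, f⟫ := by
          funext x; simp [inner_smul_right]
        show (hint (c • f)).toLp _ = c • (hint f).toLp _
        rw [MemLp.toLp_congr (hint (c • f)) ((hint f).const_smul c) (by rw [h1]),
          MemLp.toLp_const_smul] }
  have hcont : Continuous L := by
    apply LinearMap.continuous_of_seq_closed_graph
    intro u x y hu hy
    have htm : TendstoInMeasure (ν.restrict K) (fun n => (L (u n) : X → ℂ)) atTop y :=
      tendstoInMeasure_of_tendsto_Lp hy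
    obtain ⟨ns, hns, hae⟩ := htm.exists_seq_tendsto_ae
    symm
    apply Lp.ext (μ := ν.restrict K)
    have hcoe : ∀ᵐ z ∂(ν.restrict K), ∀ n, (L (u n) : X → ℂ) z = ⟪ψ z, u n⟫ := by
      rw [ae_all_iff]; intro n; exact (hint (u n)).coeFn_toLp
    refine Filter.EventuallyEq.trans
      (show (L x : X → ℂ) =ᵐ[ν.restrict K] fun z => ⟪ψ z, x⟫ from (hint x).coeFn_toLp) ?_
    filter_upwards [hae, hcoe] with z hz1 hz2
    have hz4 : Tendsto (fun i => ⟪ψ z, u (ns i)⟫) atTop (nhds ((y : X → ℂ) z)) :=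
      hz1.congr fun i => hz2 (ns i)
    have hz5 : Tendsto (fun i => ⟪ψ z, u (ns i)⟫) atTop (nhds ⟪ψ z, x⟫) :=
      Tendsto.inner tendsto_const_nhds (hu.comp hns.tendsto_atTop)
    exact tendsto_nhds_unique hz5 hz4
  let Lc : H →L[ℂ] Lp ℂ 1 (ν.restrict K) := ⟨L, hcont⟩
  refine ⟨‖Lc‖, norm_nonneg _, fun f => ?_⟩
  have h1 : ‖Lc f‖ = ∫ x in K, ‖⟪ψ x, f⟫‖ ∂ν := by
    rw [L1.norm_eq_integral_norm]
    refine integral_congr_ae ?_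
    filter_upwards [(hint f).coeFn_toLp] with x hx
    rw [show ((Lc f : Lp ℂ 1 (ν.restrict K)) : X → ℂ) x = _ from hx]
  rw [← h1]
  exact Lc.le_opNorm f


/-- For a bounded measurable function supported on a compact set, a synthesis vector exists. -/
lemma exists_synth_of_indicator [T2Space X] [BorelSpace X] [IsFiniteMeasureOnCompacts ν]
    (hmeas : ∀ f : H, AEMeasurable (fun x => ⟪ψ x, f⟫) ν)
    (hloc : ∀ (f : H) (K : Set X), IsCompact K → IntegrableOn (fun x => ⟪ψ x, f⟫) K ν)
    {K : Set X} (hK : IsCompact K) {c : X → ℂ} (hc : Measurable c) (hbd : ∀ x, ‖c x‖ ≤ 1) :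
    ∃ (hb : MemLp (K.indicator c) 2 ν) (g : H),
      IsSynth ν ψ (hb.toLp (K.indicator c)) g ∧
      ∀ f : H, ∫ x, (starRingEnd ℂ) (K.indicator c x) * ⟪ψ x, f⟫ ∂ν = ⟪g, f⟫ := by
  have hKm : MeasurableSet K := hK.isClosed.measurableSet
  haveI : IsFiniteMeasure (ν.restrict K) :=
    ⟨by rw [Measure.restrict_apply_univ]; exact hK.measure_lt_top⟩
  have hb : MemLp (K.indicator c) 2 ν :=
    (memLp_indicator_iff_restrict hKm).2
      (MemLp.of_bound hc.aestronglyMeasurable 1 (Filter.Eventually.of_forall hbd))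
  -- pointwise identity for the integrand
  have hpt : ∀ f : H, (fun x => (starRingEnd ℂ) (K.indicator c x) * ⟪ψ x, f⟫)
      = K.indicator (fun x => (starRingEnd ℂ) (c x) * ⟪ψ x, f⟫) := by
    intro f; funext x
    by_cases hx : x ∈ K
    · simp [Set.indicator_of_mem hx]
    · simp [Set.indicator_of_notMem hx]
  -- integrability of the integrand
  have hintg : ∀ f : H, Integrable
      (fun x => (starRingEnd ℂ) (K.indicator c x) * ⟪ψ x, f⟫) ν := by
    intro f
    rw [hpt f, integrable_indicator_iff hKm]
    refine Integrable.mono' (hloc f K hK).norm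
      ((((continuous_star.measurable.comp hc : Measurable fun x => (starRingEnd ℂ) (c x)).aemeasurable.restrict).mul ((hmeas f).restrict)).aestronglyMeasurable)
      (Filter.Eventually.of_forall fun x => ?_)
    rw [norm_mul, RCLike.norm_conj]
    exact mul_le_of_le_one_left (norm_nonneg _) (hbd x)
  -- bound on the functional
  obtain ⟨M, hM0, hM⟩ := coeff_L1_bound (ψ := ψ) hmeas hloc hK
  have hΦbd : ∀ f : H, ‖∫ x, (starRingEnd ℂ) (K.indicator c x) * ⟪ψ x, f⟫ ∂ν‖ ≤ M * ‖f‖ := by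
    intro f
    refine le_trans (norm_integral_le_integral_norm _) (le_trans ?_ (hM f))
    have h1 : (fun a => ‖(starRingEnd ℂ) (K.indicator c a) * ⟪ψ a, f⟫‖)
        = K.indicator (fun x => ‖(starRingEnd ℂ) (c x) * ⟪ψ x, f⟫‖) := by
      funext x
      by_cases hx : x ∈ K
      · simp [Set.indicator_of_mem hx]
      · simp [Set.indicator_of_notMem hx]
    rw [h1, integral_indicator hKm]
    refine integral_mono_of_nonneg (Filter.Eventually.of_forall fun x => by positivity)
      (hloc f K hK).norm (Filter.Eventually.of_forall fun x => ?_)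
    show ‖(starRingEnd ℂ) (c x) * ⟪ψ x, f⟫‖ ≤ ‖⟪ψ x, f⟫‖
    rw [norm_mul, RCLike.norm_conj]
    exact mul_le_of_le_one_left (norm_nonneg _) (hbd x)
  -- the functional as a continuous linear map
  let Φ₀ : H →ₗ[ℂ] ℂ :=
    { toFun := fun f => ∫ x, (starRingEnd ℂ) (K.indicator c x) * ⟪ψ x, f⟫ ∂ν
      map_add' := by
        intro f g
        have h1 : (fun x => (starRingEnd ℂ) (K.indicator c x) * ⟪ψ x, f + g⟫)
            = fun x => (starRingEnd ℂ) (K.indicator c x) * ⟪ψ x, f⟫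
              + (starRingEnd ℂ) (K.indicator c x) * ⟪ψ x, g⟫ := by
          funext x; rw [inner_add_right, mul_add]
        show (∫ x, (starRingEnd ℂ) (K.indicator c x) * ⟪ψ x, f + g⟫ ∂ν) = _
        rw [h1, integral_add (hintg f) (hintg g)]
      map_smul' := by
        intro a f
        have h1 : (fun x => (starRingEnd ℂ) (K.indicator c x) * ⟪ψ x, a • f⟫)
            = fun x => a • ((starRingEnd ℂ) (K.indicator c x) * ⟪ψ x, f⟫) := by
          funext x; rw [inner_smul_right]; simp [smul_eq_mul]; ring
        show (∫ x, (starRingEnd ℂ) (K.indicator c x) * ⟪ψ x, a • f⟫ ∂ν) = _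
        rw [h1, integral_smul]
        rfl }
  let Φ : H →L[ℂ] ℂ := LinearMap.mkContinuous Φ₀ M hΦbd
  refine ⟨hb, (InnerProductSpace.toDual ℂ H).symm Φ, ?_, ?_⟩
  · intro f
    have hcoe : (hb.toLp (K.indicator c) : X → ℂ) =ᵐ[ν] K.indicator c := hb.coeFn_toLp
    have hint2 : Integrable
        (fun x => (starRingEnd ℂ) ((hb.toLp (K.indicator c) : X → ℂ) x) * ⟪ψ x, f⟫) ν := by
      refine (hintg f).congr ?_
      filter_upwards [hcoe] with x hx
      rw [hx]
    refine ⟨hint2, ?_⟩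
    have : (∫ x, (starRingEnd ℂ) ((hb.toLp (K.indicator c) : X → ℂ) x) * ⟪ψ x, f⟫ ∂ν)
        = ∫ x, (starRingEnd ℂ) (K.indicator c x) * ⟪ψ x, f⟫ ∂ν := by
      refine integral_congr_ae ?_
      filter_upwards [hcoe] with x hx
      rw [hx]
    rw [this]
    exact (InnerProductSpace.toDual_symm_apply (𝕜 := ℂ) (E := H) (y := Φ) (x := f)).symm
  · intro f
    exact (InnerProductSpace.toDual_symm_apply (𝕜 := ℂ) (E := H) (y := Φ) (x := f)).symm


/-- Key lemma: if `(h, -G)` is "in the graph of `D*`", then the coefficient function of `h`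
is a.e. equal to `G`. -/
lemma coeff_eq_of_forall_synth [T2Space X] [BorelSpace X] [SigmaCompactSpace X]
    [IsFiniteMeasureOnCompacts ν]
    (hmeas : ∀ f : H, AEMeasurable (fun x => ⟪ψ x, f⟫) ν)
    (hloc : ∀ (f : H) (K : Set X), IsCompact K → IntegrableOn (fun x => ⟪ψ x, f⟫) K ν)
    (h : H) (G : Lp ℂ 2 ν)
    (hyp : ∀ (F : Lp ℂ 2 ν) (g : H), IsSynth ν ψ F g → ⟪g, h⟫ = ⟪F, G⟫) :
    (fun x => ⟪ψ x, h⟫) =ᵐ[ν] (G : X → ℂ) := by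
  have hφm : (fun x => ⟪ψ x, h⟫) =ᵐ[ν] (hmeas h).mk _ := (hmeas h).ae_eq_mk
  set φm := (hmeas h).mk _ with hφm_def
  have hφm_meas : Measurable φm := (hmeas h).measurable_mk
  have hGm : (G : X → ℂ) =ᵐ[ν] (Lp.aestronglyMeasurable G).mk _ :=
    (Lp.aestronglyMeasurable G).ae_eq_mk
  set Gm := (Lp.aestronglyMeasurable G).mk _ with hGm_def
  have hGm_meas : Measurable Gm :=
    (Lp.aestronglyMeasurable G).stronglyMeasurable_mk.measurable
  set d := fun x => φm x - Gm x with hd_def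
  have hd_meas : Measurable d := hφm_meas.sub hGm_meas
  suffices hae : d =ᵐ[ν] 0 by
    filter_upwards [hφm, hGm, hae] with x h1 h2 h3
    rw [h1, h2]
    have h3' : φm x - Gm x = 0 := h3
    exact sub_eq_zero.mp h3'
  set c := fun x => if d x = 0 then (0 : ℂ) else d x / (‖d x‖ : ℂ) with hc_def
  have hc_meas : Measurable c :=
    Measurable.ite (hd_meas (measurableSet_singleton 0)) measurable_const
      (hd_meas.div (Complex.measurable_ofReal.comp hd_meas.norm))
  have hc_bd : ∀ x, ‖c x‖ ≤ 1 := by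
    intro x
    by_cases hx : d x = 0
    · simp [hc_def, hx]
    · rw [hc_def]
      simp only [hx, if_false]
      rw [norm_div, Complex.norm_real, norm_norm, div_self (by simpa using hx)]
  have hkey : ∀ x, (starRingEnd ℂ) (c x) * d x = (‖d x‖ : ℂ) := by
    intro x
    by_cases hx : d x = 0
    · simp [hc_def, hx]
    · rw [hc_def]
      simp only [hx, if_false]
      rw [map_div₀, Complex.conj_ofReal]
      rw [div_mul_eq_mul_div, mul_comm, Complex.mul_conj']
      have hne : (‖d x‖ : ℂ) ≠ 0 := by
        simpa using norm_ne_zero_iff.mpr hx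
      rw [sq, mul_div_assoc, div_self hne, mul_one]
  -- on each compact piece, d vanishes a.e.
  have hK0 : ∀ n : ℕ, ν ({x | d x ≠ 0} ∩ compactCovering X n) = 0 := by
    intro n
    set K := compactCovering X n with hKdef
    have hK : IsCompact K := isCompact_compactCovering X n
    have hKm : MeasurableSet K := hK.isClosed.measurableSet
    haveI : IsFiniteMeasure (ν.restrict K) :=
      ⟨by rw [Measure.restrict_apply_univ]; exact hK.measure_lt_top⟩
    obtain ⟨hb, g, hsyn, hval⟩ := exists_synth_of_indicator hmeas hloc hK hc_meas hc_bd
    have e1 : ∫ x, (starRingEnd ℂ) (K.indicator c x) * ⟪ψ x, h⟫ ∂ν = ⟪g, h⟫ := hval h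
    have e2 : ⟪g, h⟫ = ⟪hb.toLp (K.indicator c), G⟫ := hyp _ g hsyn
    have e3 : ⟪hb.toLp (K.indicator c), G⟫
        = ∫ x, (starRingEnd ℂ) (K.indicator c x) * (G : X → ℂ) x ∂ν := by
      rw [inner_L2_eq_integral]
      refine integral_congr_ae ?_
      filter_upwards [hb.coeFn_toLp] with x hx
      rw [hx]
    have hi1 : Integrable (fun x => (starRingEnd ℂ) (K.indicator c x) * ⟪ψ x, h⟫) ν := by
      refine ((hsyn h).1).congr ?_
      filter_upwards [hb.coeFn_toLp] with x hx
      rw [hx]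
    have hi2 : Integrable (fun x => (starRingEnd ℂ) (K.indicator c x) * (G : X → ℂ) x) ν := by
      refine (L2.integrable_inner (𝕜 := ℂ) (hb.toLp (K.indicator c)) G).congr ?_
      filter_upwards [hb.coeFn_toLp] with x hx
      show ⟪(hb.toLp (K.indicator c) : X → ℂ) x, (G : X → ℂ) x⟫ = _
      rw [hx]
      exact mul_comm _ _
    have e5 : ∫ x, ((starRingEnd ℂ) (K.indicator c x) * ⟪ψ x, h⟫
        - (starRingEnd ℂ) (K.indicator c x) * (G : X → ℂ) x) ∂ν = 0 := by
      rw [integral_sub hi1 hi2, e1, ← e3, ← e2, sub_self]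
    have e6 : (fun x => (starRingEnd ℂ) (K.indicator c x) * ⟪ψ x, h⟫
        - (starRingEnd ℂ) (K.indicator c x) * (G : X → ℂ) x)
        =ᵐ[ν] K.indicator (fun x => (‖d x‖ : ℂ)) := by
      filter_upwards [hφm, hGm] with x h1 h2
      by_cases hx : x ∈ K
      · rw [Set.indicator_of_mem hx, Set.indicator_of_mem hx, ← mul_sub, h1, h2]
        exact hkey x
      · simp [Set.indicator_of_notMem hx]
    have e7 : (∫ x in K, ((‖d x‖ : ℝ) : ℂ) ∂ν) = 0 := by
      rw [← integral_indicator hKm, ← integral_congr_ae e6, e5]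
    have hGint : IntegrableOn Gm K ν := by
      haveI : Fact ((1:ℝ≥0∞) ≤ 2) := ⟨one_le_two⟩
      have h2 : MemLp (G : X → ℂ) 2 (ν.restrict K) := (Lp.memLp G).restrict K
      have h1 : MemLp (G : X → ℂ) 1 (ν.restrict K) := h2.mono_exponent one_le_two
      exact (memLp_one_iff_integrable.1 h1).congr (hGm.restrict)
    have hdint : IntegrableOn (fun x => ‖d x‖) K ν := by
      refine Integrable.norm ?_
      exact ((hloc h K hK).congr hφm.restrict).sub hGint
    have e8 : (fun x => ‖d x‖) =ᵐ[ν.restrict K] 0 := by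
      refine (integral_eq_zero_iff_of_nonneg (fun x => norm_nonneg (d x)) hdint).1 ?_
      have ecast : ∫ x in K, ((‖d x‖ : ℝ) : ℂ) ∂ν
          = ((∫ x in K, ‖d x‖ ∂ν : ℝ) : ℂ) := integral_ofReal
      exact Complex.ofReal_eq_zero.mp (ecast.symm.trans e7)
    have e9 : ∀ᵐ x ∂(ν.restrict K), d x = 0 := by
      filter_upwards [e8] with x hx
      have : ‖d x‖ = 0 := hx
      simpa using this
    rw [ae_iff] at e9
    rw [Measure.restrict_apply (by exact (hd_meas (measurableSet_singleton 0)).compl)] at e9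
    exact e9
  rw [Filter.EventuallyEq, ae_iff]
  have hcover : {x | ¬ d x = (0 : X → ℂ) x} = ⋃ n, ({x | d x ≠ 0} ∩ compactCovering X n) := by
    rw [← Set.inter_iUnion, iUnion_compactCovering, Set.inter_univ]
    rfl
  rw [hcover]
  exact measure_iUnion_null hK0

lemma IsSynth.add {F F' : Lp ℂ 2 ν} {g g' : H} (h : IsSynth ν ψ F g) (h' : IsSynth ν ψ F' g') :
    IsSynth ν ψ (F + F') (g + g') := by
  intro f
  have h1 := h f; have h2 := h' f
  have hae : (fun x => (starRingEnd ℂ) (F x) * ⟪ψ x, f⟫ + (starRingEnd ℂ) (F' x) * ⟪ψ x, f⟫)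
      =ᵐ[ν] fun x => (starRingEnd ℂ) ((F + F' : Lp ℂ 2 ν) x) * ⟪ψ x, f⟫ := by
    filter_upwards [Lp.coeFn_add F F'] with x hx
    rw [hx]
    simp [add_mul]
  refine ⟨(h1.1.add h2.1).congr hae, ?_⟩
  rw [← integral_congr_ae hae, integral_add h1.1 h2.1, h1.2, h2.2, inner_add_left]

lemma IsSynth.smul {F : Lp ℂ 2 ν} {g : H} (a : ℂ) (h : IsSynth ν ψ F g) :
    IsSynth ν ψ (a • F) (a • g) := by
  intro f
  have h1 := h f
  have hae : (fun x => (starRingEnd ℂ) a • ((starRingEnd ℂ) (F x) * ⟪ψ x, f⟫))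
      =ᵐ[ν] fun x => (starRingEnd ℂ) ((a • F : Lp ℂ 2 ν) x) * ⟪ψ x, f⟫ := by
    filter_upwards [Lp.coeFn_smul a F] with x hx
    rw [hx]
    simp [smul_eq_mul, map_mul, mul_assoc]
  refine ⟨((h1.1.smul ((starRingEnd ℂ) a))).congr hae, ?_⟩
  rw [← integral_congr_ae hae, integral_smul, h1.2, inner_smul_left]
  rfl

lemma IsSynth.zero : IsSynth ν ψ (0 : Lp ℂ 2 ν) (0 : H) := by
  intro f
  have hae : (fun _ : X => (0 : ℂ))
      =ᵐ[ν] fun x => (starRingEnd ℂ) ((0 : Lp ℂ 2 ν) x) * ⟪ψ x, f⟫ := by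
    filter_upwards [Lp.coeFn_zero ℂ 2 ν] with x hx
    rw [hx]
    simp
  exact ⟨(integrable_zero _ _ _).congr hae,
    by rw [← integral_congr_ae hae, integral_zero, inner_zero_left]⟩

lemma adj_to_synth [T2Space X] [BorelSpace X] [SigmaCompactSpace X] [IsFiniteMeasureOnCompacts ν]
    (hmeas : ∀ f : H, AEMeasurable (fun x => ⟪ψ x, f⟫) ν)
    (hloc : ∀ (f : H) (K : Set X), IsCompact K → IntegrableOn (fun x => ⟪ψ x, f⟫) K ν)
    (hclosed : ∀ (F : ℕ → Lp ℂ 2 ν) (g : ℕ → H) (Flim : Lp ℂ 2 ν) (glim : H),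
        (∀ n, IsSynth ν ψ (F n) (g n)) →
        Tendsto F atTop (nhds Flim) → Tendsto g atTop (nhds glim) →
        IsSynth ν ψ Flim glim)
    (F₀ : Lp ℂ 2 ν) (g₀ : H) (hadj : MemGraphAdjC ν ψ F₀ g₀) : IsSynth ν ψ F₀ g₀ := by
  haveI : Fact ((1:ℝ≥0∞) ≤ 2) := ⟨one_le_two⟩
  let GD : Submodule ℂ (WithLp 2 ((Lp ℂ 2 ν) × H)) :=
    { carrier := {q | IsSynth ν ψ q.fst q.snd}
      add_mem' := fun ha hb => ha.add hb
      zero_mem' := IsSynth.zero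
      smul_mem' := fun a q hq => hq.smul a }
  have hcf : Continuous (fun z : WithLp 2 ((Lp ℂ 2 ν) × H) => z.fst) :=
    continuous_fst.comp (WithLp.prodContinuousLinearEquiv 2 ℂ (Lp ℂ 2 ν) H).continuous
  have hcs : Continuous (fun z : WithLp 2 ((Lp ℂ 2 ν) × H) => z.snd) :=
    continuous_snd.comp (WithLp.prodContinuousLinearEquiv 2 ℂ (Lp ℂ 2 ν) H).continuous
  have hGDclosed : IsClosed (GD : Set (WithLp 2 ((Lp ℂ 2 ν) × H))) := by
    refine IsSeqClosed.isClosed ?_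
    intro q q₀ hq hlim
    exact hclosed (fun n => (q n).fst) (fun n => (q n).snd) q₀.fst q₀.snd hq
      ((hcf.tendsto q₀).comp hlim) ((hcs.tendsto q₀).comp hlim)
  haveI : CompleteSpace GD := hGDclosed.completeSpace_coe
  set p₀ : WithLp 2 ((Lp ℂ 2 ν) × H) := (WithLp.equiv 2 _).symm (F₀, g₀) with hp₀
  have hmem : p₀ ∈ GDᗮᗮ := by
    rw [Submodule.mem_orthogonal]
    intro u hu
    have hDstar : ∀ (F : Lp ℂ 2 ν) (g : H), IsSynth ν ψ F g → ⟪g, u.snd⟫ = ⟪F, -u.fst⟫ := by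
      intro F g hs
      have h0 := (Submodule.mem_orthogonal GD u).mp hu ((WithLp.equiv 2 _).symm (F, g)) hs
      rw [WithLp.prod_inner_apply] at h0
      rw [inner_neg_right]
      have h0' : ⟪F, u.fst⟫ + ⟪g, u.snd⟫ = 0 := h0
      linear_combination h0'
    have hcoeff := coeff_eq_of_forall_synth hmeas hloc u.snd (-u.fst) hDstar
    have hmem2 : MemLp (fun x => ⟪ψ x, u.snd⟫) 2 ν := (Lp.memLp (-u.fst)).ae_eq hcoeff.symm
    have htoLp : hmem2.toLp _ = -u.fst := Lp.ext (hmem2.coeFn_toLp.trans hcoeff)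
    have hval := hadj u.snd hmem2
    rw [htoLp, inner_neg_right] at hval
    rw [WithLp.prod_inner_apply]
    have c1 : ⟪u.snd, g₀⟫ = -⟪u.fst, F₀⟫ := by
      have h2 := congrArg (starRingEnd ℂ) hval
      rw [map_neg, inner_conj_symm, inner_conj_symm] at h2
      exact h2
    have : p₀.fst = F₀ := rfl
    show ⟪u.fst, F₀⟫ + ⟪u.snd, g₀⟫ = 0; rw [c1]
    ring
  rw [Submodule.orthogonal_orthogonal] at hmem
  exact hmem

lemma memGraphS_symm {f h f' h' : H} (h1 : MemGraphS ν ψ f h) (h2 : MemGraphS ν ψ f' h') :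
    ⟪h, f'⟫ = ⟪f, h'⟫ := by
  obtain ⟨hf, hadj⟩ := h1
  obtain ⟨hf', hadj'⟩ := h2
  have e1 := hadj f' hf'
  have e2 := hadj' f hf
  have e3 := congrArg (starRingEnd ℂ) e2
  rw [inner_conj_symm, inner_conj_symm] at e3
  rw [e1, e3]

lemma surj_one_add_S (w : H) : ∃ f : H, MemGraphS ν ψ f (w - f) := by
  haveI : Fact ((1:ℝ≥0∞) ≤ 2) := ⟨one_le_two⟩
  let GC : Submodule ℂ (WithLp 2 (H × Lp ℂ 2 ν)) :=
    { carrier := {q | ∃ hq : MemLp (fun x => ⟪ψ x, q.fst⟫) 2 ν,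
        hq.toLp (fun x => ⟪ψ x, q.fst⟫) = q.snd}
      zero_mem' := by
        have hm : MemLp (fun x => ⟪ψ x, ((0 : WithLp 2 (H × Lp ℂ 2 ν)).fst : H)⟫) 2 ν := by
          simpa using (zero_memLp : MemLp (fun _ : X => (0:ℂ)) 2 ν)
        refine ⟨hm, ?_⟩
        apply Lp.ext
        refine hm.coeFn_toLp.trans ?_
        filter_upwards [Lp.coeFn_zero ℂ 2 ν] with x hx
        show ⟪ψ x, (0 : H)⟫ = ((0 : Lp ℂ 2 ν) : X → ℂ) x
        rw [hx]
        simp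
      add_mem' := by
        rintro a b ⟨ha1, ha2⟩ ⟨hb1, hb2⟩
        have hm : MemLp (fun x => ⟪ψ x, (a + b : WithLp 2 (H × Lp ℂ 2 ν)).fst⟫) 2 ν := by
          refine (ha1.add hb1).ae_eq (Filter.Eventually.of_forall fun x => ?_)
          show ⟪ψ x, a.fst⟫ + ⟪ψ x, b.fst⟫ = _
          rw [← inner_add_right]
          rfl
        refine ⟨hm, ?_⟩
        apply Lp.ext
        rw [show (a + b : WithLp 2 (H × Lp ℂ 2 ν)).snd = a.snd + b.snd from rfl, ← ha2, ← hb2]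
        filter_upwards [hm.coeFn_toLp,
          Lp.coeFn_add (ha1.toLp (fun x => ⟪ψ x, a.fst⟫)) (hb1.toLp (fun x => ⟪ψ x, b.fst⟫)),
          ha1.coeFn_toLp, hb1.coeFn_toLp] with x e1 e2 e3 e4
        rw [e1, e2, Pi.add_apply, e3, e4]
        exact inner_add_right _ _ _
      smul_mem' := by
        rintro c a ⟨ha1, ha2⟩
        have hm : MemLp (fun x => ⟪ψ x, (c • a : WithLp 2 (H × Lp ℂ 2 ν)).fst⟫) 2 ν := by
          refine (ha1.const_smul c).ae_eq (Filter.Eventually.of_forall fun x => ?_)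
          show c • ⟪ψ x, a.fst⟫ = ⟪ψ x, (c • a : WithLp 2 (H × Lp ℂ 2 ν)).fst⟫
          rw [show (c • a : WithLp 2 (H × Lp ℂ 2 ν)).fst = c • a.fst from rfl,
            inner_smul_right]
          rfl
        refine ⟨hm, ?_⟩
        apply Lp.ext
        rw [show (c • a : WithLp 2 (H × Lp ℂ 2 ν)).snd = c • a.snd from rfl, ← ha2]
        filter_upwards [hm.coeFn_toLp,
          Lp.coeFn_smul c (ha1.toLp (fun x => ⟪ψ x, a.fst⟫)), ha1.coeFn_toLp] with x e1 e2 e3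
        rw [e1, e2, Pi.smul_apply, e3,
          show (c • a : WithLp 2 (H × Lp ℂ 2 ν)).fst = c • a.fst from rfl, inner_smul_right]
        rfl }
  have hcf : Continuous (fun z : WithLp 2 (H × Lp ℂ 2 ν) => z.fst) :=
    continuous_fst.comp (WithLp.prodContinuousLinearEquiv 2 ℂ H (Lp ℂ 2 ν)).continuous
  have hcs : Continuous (fun z : WithLp 2 (H × Lp ℂ 2 ν) => z.snd) :=
    continuous_snd.comp (WithLp.prodContinuousLinearEquiv 2 ℂ H (Lp ℂ 2 ν)).continuous
  have hGCclosed : IsClosed (GC : Set (WithLp 2 (H × Lp ℂ 2 ν))) := by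
    refine IsSeqClosed.isClosed ?_
    intro q q₀ hq hlim
    have hfst : Tendsto (fun n => (q n).fst) atTop (nhds q₀.fst) := (hcf.tendsto q₀).comp hlim
    have hsnd : Tendsto (fun n => (q n).snd) atTop (nhds q₀.snd) := (hcs.tendsto q₀).comp hlim
    have htm : TendstoInMeasure ν (fun n => ((q n).snd : X → ℂ)) atTop (q₀.snd : X → ℂ) :=
      tendstoInMeasure_of_tendsto_Lp hsnd
    obtain ⟨ns, hns, hae⟩ := htm.exists_seq_tendsto_ae
    have hcoe : ∀ᵐ x ∂ν, ∀ n, ((q n).snd : X → ℂ) x = ⟪ψ x, (q n).fst⟫ := by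
      rw [ae_all_iff]
      intro n
      obtain ⟨h1, h2⟩ := hq n
      rw [← h2]
      exact h1.coeFn_toLp
    have hcoeff : (fun x => ⟪ψ x, q₀.fst⟫) =ᵐ[ν] (q₀.snd : X → ℂ) := by
      filter_upwards [hae, hcoe] with x e1 e2
      have t1 : Tendsto (fun i => ⟪ψ x, (q (ns i)).fst⟫) atTop (nhds ((q₀.snd : X → ℂ) x)) :=
        e1.congr fun i => e2 (ns i)
      have t2 : Tendsto (fun i => ⟪ψ x, (q (ns i)).fst⟫) atTop (nhds ⟪ψ x, q₀.fst⟫) :=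
        Tendsto.inner tendsto_const_nhds (hfst.comp hns.tendsto_atTop)
      exact tendsto_nhds_unique t2 t1
    have hm : MemLp (fun x => ⟪ψ x, q₀.fst⟫) 2 ν := (Lp.memLp q₀.snd).ae_eq hcoeff.symm
    exact ⟨hm, Lp.ext (hm.coeFn_toLp.trans hcoeff)⟩
  haveI : CompleteSpace GC := hGCclosed.completeSpace_coe
  set w₀ : WithLp 2 (H × Lp ℂ 2 ν) := (WithLp.equiv 2 _).symm (w, 0) with hw₀
  set q : WithLp 2 (H × Lp ℂ 2 ν) := (GC.orthogonalProjection w₀ : WithLp 2 (H × Lp ℂ 2 ν))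
    with hqdef
  obtain ⟨hq1, hq2⟩ := (GC.orthogonalProjection w₀).2
  refine ⟨q.fst, hq1, ?_⟩
  intro f'' hf''
  have hp : ((WithLp.equiv 2 (H × Lp ℂ 2 ν)).symm (f'', hf''.toLp (fun x => ⟪ψ x, f''⟫))) ∈ GC :=
    ⟨hf'', rfl⟩
  have horth : w₀ - q ∈ GCᗮ := Submodule.sub_starProjection_mem_orthogonal (K := GC) w₀
  have h0 := (Submodule.mem_orthogonal' GC (w₀ - q)).mp horth _ hp
  rw [WithLp.prod_inner_apply] at h0
  have e1 : ⟪w - q.fst, f''⟫ + ⟪(0 : Lp ℂ 2 ν) - q.snd, hf''.toLp (fun x => ⟪ψ x, f''⟫)⟫ = 0 := h0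
  rw [zero_sub, inner_neg_left] at e1
  rw [hq2]
  linear_combination e1


/-- Under the hypotheses of the locally compact σ-compact setting, with
`ψ` total, coefficient functions measurable and locally integrable and `Dom(C)` dense:
(i) `D ⊆ C*`, and `D` is closable; (ii) `D` is closed iff `D = C*`, and in that case the
operator `S = C*C` is self-adjoint (its graph equals the graph of its adjoint). -/
theorem synthesis_subset_adjoint_and_closed_iff
    {X : Type*} [TopologicalSpace X] [T2Space X] [LocallyCompactSpace X] [SigmaCompactSpace X]
    [MeasurableSpace X] [BorelSpace X] (ν : Measure X) [IsFiniteMeasureOnCompacts ν]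
    {H : Type*} [NormedAddCommGroup H] [InnerProductSpace ℂ H] [CompleteSpace H]
    (ψ : X → H)
    (hmeas : ∀ f : H, AEMeasurable (fun x => ⟪ψ x, f⟫) ν)
    (hloc : ∀ (f : H) (K : Set X), IsCompact K →
      IntegrableOn (fun x => ⟪ψ x, f⟫) K ν)
    (htotal : (Submodule.span ℂ (Set.range ψ)).topologicalClosure = ⊤)
    (hdense : Dense {f : H | MemLp (fun x => ⟪ψ x, f⟫) 2 ν}) :
    -- (i) D ⊆ C*
    (∀ (F : Lp ℂ 2 ν) (g : H), IsSynth ν ψ F g → MemGraphAdjC ν ψ F g) ∧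
    -- in particular D is closable
    (∀ (F : ℕ → Lp ℂ 2 ν) (g : ℕ → H) (glim : H),
        (∀ n, IsSynth ν ψ (F n) (g n)) →
        Tendsto F atTop (nhds 0) → Tendsto g atTop (nhds glim) → glim = 0) ∧
    -- (ii) D is closed iff D = C*
    ((∀ (F : ℕ → Lp ℂ 2 ν) (g : ℕ → H) (Flim : Lp ℂ 2 ν) (glim : H),
        (∀ n, IsSynth ν ψ (F n) (g n)) →
        Tendsto F atTop (nhds Flim) → Tendsto g atTop (nhds glim) →
        IsSynth ν ψ Flim glim) ↔
      (∀ (F : Lp ℂ 2 ν) (g : H), IsSynth ν ψ F g ↔ MemGraphAdjC ν ψ F g)) ∧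
    -- and in that case S = C*C is self-adjoint
    ((∀ (F : Lp ℂ 2 ν) (g : H), IsSynth ν ψ F g ↔ MemGraphAdjC ν ψ F g) →
      ∀ f h : H, MemGraphS ν ψ f h ↔
        (∀ f' h' : H, MemGraphS ν ψ f' h' → ⟪h, f'⟫ = ⟪f, h'⟫)) := by
  refine ⟨fun F g h => isSynth_to_adj h, fun F g glim hs hF hg => closable_aux hdense F g glim hs hF hg, ?_, ?_⟩
  · constructor
    · intro hclosed F g
      exact ⟨fun hs => isSynth_to_adj hs, fun hadj => adj_to_synth hmeas hloc hclosed F g hadj⟩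
    · intro heq F g Flim glim hs hF hg
      rw [heq]
      intro f hf
      have h1 : Tendsto (fun n => ⟪g n, f⟫) atTop (nhds ⟪glim, f⟫) := hg.inner tendsto_const_nhds
      have h2 : Tendsto (fun n => ⟪F n, hf.toLp (fun x => ⟪ψ x, f⟫)⟫) atTop
          (nhds ⟪Flim, hf.toLp (fun x => ⟪ψ x, f⟫)⟫) := hF.inner tendsto_const_nhds
      have h3 : (fun n => ⟪g n, f⟫) = fun n => ⟪F n, hf.toLp (fun x => ⟪ψ x, f⟫)⟫ := by
        funext n
        exact isSynth_to_adj (hs n) f hf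
      rw [h3] at h1
      exact tendsto_nhds_unique h1 h2
  · intro _ f h
    constructor
    · intro hS f' h' hS'
      exact memGraphS_symm hS hS'
    · intro hsym
      obtain ⟨u, hu⟩ := surj_one_add_S (ν := ν) (ψ := ψ) (f + h)
      have key : ∀ v sv, MemGraphS ν ψ v sv → ⟪f - u, v + sv⟫ = 0 := by
        intro v sv hv
        have e1 : ⟪h, v⟫ = ⟪f, sv⟫ := hsym v sv hv
        have e2 : ⟪f + h - u, v⟫ = ⟪u, sv⟫ := memGraphS_symm hu hv
        rw [inner_sub_left, inner_add_left] at e2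
        rw [inner_sub_left, inner_add_right, inner_add_right]
        linear_combination e2 - e1
      obtain ⟨v, hv⟩ := surj_one_add_S (ν := ν) (ψ := ψ) (f - u)
      have h4 := key v (f - u - v) hv
      have h5 : v + (f - u - v) = f - u := by abel
      rw [h5] at h4
      have h6 : f = u := sub_eq_zero.mp (inner_self_eq_zero.mp h4)
      rw [← h6] at hu
      have h7 : f + h - f = h := by abel
      rw [h7] at hu
      exact hu


end SemiFrames4
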